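/- A symmetric bilinear form h = (h_{ij}) on 𝔸_n has totally symmetric trilinear map (a,b,c) ↦ h(a·b, c) if and only if h_{ij} = 0 whenever i ≠ n or j ≠ n (i.e., only h_{nn} may be nonzero). -/

import Mathlib

open Finset

/-- Multiplication of the algebra `𝔸_n = ℂⁿ`: `(a·b)^i = a^i b^n`. -/
noncomputable def Amul (n : ℕ) (hn : 0 < n) (a b : Fin n → ℂ) : Fin n → ℂ :=
  fun i => a i * b ⟨n - 1, Nat.sub_lt hn Nat.one_pos⟩

/-- The bilinear form on `𝔸_n` with matrix `H`. -/
noncomputable def AForm (n : ℕ) (H : Matrix (Fin n) (Fin n) ℂ) (a b : Fin n → ℂ) : ℂ :=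
  ∑ i : Fin n, ∑ j : Fin n, H i j * a i * b j

lemma AForm_single (n : ℕ) (H : Matrix (Fin n) (Fin n) ℂ) (i j : Fin n) :
    AForm n H (Pi.single i 1) (Pi.single j 1) = H i j := by
  unfold AForm
  rw [Finset.sum_eq_single i]
  · rw [Finset.sum_eq_single j]
    · simp
    · intro l _ hl; simp [Pi.single_eq_of_ne hl]
    · intro h; exact absurd (mem_univ _) h
  · intro k _ hk
    apply Finset.sum_eq_zero; intro l _; simp [Pi.single_eq_of_ne hk]
  · intro h; exact absurd (mem_univ _) h

lemma AForm_diag (n : ℕ) (hn : 0 < n) (H : Matrix (Fin n) (Fin n) ℂ)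
    (h0 : ∀ i j : Fin n, (i ≠ ⟨n - 1, Nat.sub_lt hn Nat.one_pos⟩ ∨
        j ≠ ⟨n - 1, Nat.sub_lt hn Nat.one_pos⟩) → H i j = 0) (x y : Fin n → ℂ) :
    AForm n H x y = H ⟨n - 1, Nat.sub_lt hn Nat.one_pos⟩ ⟨n - 1, Nat.sub_lt hn Nat.one_pos⟩
      * x ⟨n - 1, Nat.sub_lt hn Nat.one_pos⟩ * y ⟨n - 1, Nat.sub_lt hn Nat.one_pos⟩ := by
  unfold AForm
  rw [Finset.sum_eq_single (⟨n - 1, Nat.sub_lt hn Nat.one_pos⟩ : Fin n)]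
  · rw [Finset.sum_eq_single (⟨n - 1, Nat.sub_lt hn Nat.one_pos⟩ : Fin n)]
    · intro l _ hl; rw [h0 _ l (Or.inr hl)]; ring
    · intro h; exact absurd (mem_univ _) h
  · intro k _ hk
    apply Finset.sum_eq_zero; intro l _; rw [h0 k l (Or.inl hk)]; ring
  · intro h; exact absurd (mem_univ _) h

/-- For a symmetric bilinear form `h` on `𝔸_n`, the trilinear map
`(a,b,c) ↦ h(a·b, c)` is totally symmetric iff `h_{ij} = 0` whenever
`i ≠ n` or `j ≠ n` (so only `h_{nn}` may be nonzero). -/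
theorem An_third_order_cocycle_classification (n : ℕ) (hn : 0 < n)
    (H : Matrix (Fin n) (Fin n) ℂ) (hsymm : ∀ i j, H i j = H j i) :
    (∀ a b c : Fin n → ℂ,
        AForm n H (Amul n hn a b) c = AForm n H (Amul n hn b a) c ∧
        AForm n H (Amul n hn a b) c = AForm n H (Amul n hn a c) b ∧
        AForm n H (Amul n hn a b) c = AForm n H (Amul n hn b c) a ∧
        AForm n H (Amul n hn a b) c = AForm n H (Amul n hn c a) b ∧
        AForm n H (Amul n hn a b) c = AForm n H (Amul n hn c b) a) ↔
    (∀ i j : Fin n, (i ≠ ⟨n - 1, Nat.sub_lt hn Nat.one_pos⟩ ∨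
        j ≠ ⟨n - 1, Nat.sub_lt hn Nat.one_pos⟩) → H i j = 0) := by
  set ν : Fin n := ⟨n - 1, Nat.sub_lt hn Nat.one_pos⟩ with hν
  constructor
  · intro h
    have key : ∀ i j : Fin n, j ≠ ν → H i j = 0 := by
      intro i j hj
      have h2 := (h (Pi.single i 1) (Pi.single j 1) (Pi.single ν 1)).2.1
      have e1 : Amul n hn (Pi.single i 1) (Pi.single j 1) = fun _ => 0 := by
        funext k
        simp only [Amul]
        rw [show (⟨n - 1, Nat.sub_lt hn Nat.one_pos⟩ : Fin n) = ν from rfl,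
          Pi.single_eq_of_ne (Ne.symm hj)]
        ring
      have e2 : Amul n hn (Pi.single i 1) (Pi.single ν 1) = Pi.single i 1 := by
        funext k
        simp [Amul]
        rw [show (⟨n - 1, Nat.sub_lt hn Nat.one_pos⟩ : Fin n) = ν from rfl]; simp
      rw [e1, e2, AForm_single] at h2
      have : AForm n H (fun _ => (0:ℂ)) (Pi.single ν 1) = 0 := by
        unfold AForm; apply Finset.sum_eq_zero; intro k _
        apply Finset.sum_eq_zero; intro l _; ring
      rw [this] at h2
      exact h2.symm
    intro i j hij
    rcases hij with hi | hj
    · rw [hsymm]; exact key j i hi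
    · exact key i j hj
  · intro h0 a b c
    have e := AForm_diag n hn H h0
    refine ⟨?_, ?_, ?_, ?_, ?_⟩ <;> simp only [e, Amul] <;> ring
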